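/- Let τ: A → 𝔄 be an 𝔄-trace, with non degenerate action. Then (i) π_τ^op(A^op) ⊆ π_τ(A)' in B(L²(A,τ)); and (ii) there is a conjugate-linear 𝔄-morphism J: L²(A,τ) → L²(A,τ) (i.e. J(α·z) = J(z)·α* and J(z·α) = α*·J(z)) with J² = id, satisfying J(â) = (a*)^ and J π_τ(a) J = π_τ^op(a*) for all a ∈ A, and ⟨Jz, z'⟩ = ⟨Jz', z⟩ for all z, z' ∈ L²(A,τ). -/

import Mathlib

open Filter Topology

noncomputable section

/-- A positive element of a `*`-ring: one of the form `star b * b`. -/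
def IsPosElem {R : Type} [Mul R] [Star R] (x : R) : Prop := ∃ b : R, x = star b * b

/-- Positivity for an `n × n` matrix over a `*`-ring, phrased entrywise:
`M = star b * b` for some rectangular matrix `b`. -/
def MatPos {R : Type} [AddCommMonoid R] [Mul R] [Star R] {n : ℕ}
    (M : Fin n → Fin n → R) : Prop :=
  ∃ (m : ℕ) (b : Fin m → Fin n → R), ∀ i j, M i j = ∑ k, star (b k i) * b k j

/-- A map between `*`-rings is completely positive if all its amplifications map
positive matrices to positive matrices. -/
def IsCPMap {R Z : Type} [AddCommMonoid R] [Mul R] [Star R]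
    [AddCommMonoid Z] [Mul Z] [Star Z] (φ : R → Z) : Prop :=
  ∀ (n : ℕ) (M : Fin n → Fin n → R), MatPos M → MatPos (fun i j => φ (M i j))

variable (𝔄 A : Type) [NonUnitalCStarAlgebra 𝔄] [NonUnitalCStarAlgebra A]

/-- A compatible right Banach `𝔄`-module structure on the C*-algebra `A`,
making `A` an `𝔄`-C*-module. -/
structure CStarAction where
  act : A → 𝔄 → A
  act_add : ∀ (a : A) (α β : 𝔄), act a (α + β) = act a α + act a β
  add_act : ∀ (a b : A) (α : 𝔄), act (a + b) α = act a α + act b α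
  act_smulC : ∀ (c : ℂ) (a : A) (α : 𝔄), act a (c • α) = c • act a α
  smulC_act : ∀ (c : ℂ) (a : A) (α : 𝔄), act (c • a) α = c • act a α
  norm_act : ∀ (a : A) (α : 𝔄), ‖act a α‖ ≤ ‖a‖ * ‖α‖
  mul_act : ∀ (a b : A) (α : 𝔄), act (a * b) α = a * act b α
  act_mul : ∀ (a : A) (α β : 𝔄), act a (α * β) = act (act a α) β
  star_compat : ∀ (a : A) (α β : 𝔄),
    act (star (act (star a) (star α))) β = star (act (star (act a β)) (star α))

variable {𝔄 A}

/-- The associated left action `α • a := (a* • α*)*`. -/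
def CStarAction.lact (S : CStarAction 𝔄 A) (α : 𝔄) (a : A) : A :=
  star (S.act (star a) (star α))

/-- The action is non degenerate if `a • α = 0` for all `a` forces `α = 0`. -/
def CStarAction.NonDegenerate (S : CStarAction 𝔄 A) : Prop :=
  ∀ α : 𝔄, (∀ a : A, S.act a α = 0) → α = 0

/-- The two-sided action is a biaction: `(a • α) b = a (α • b)`. -/
def CStarAction.Biaction (S : CStarAction 𝔄 A) : Prop :=
  ∀ (a : A) (α : 𝔄) (b : A), S.act a α * b = a * S.lact α b

/-- An `𝔄`-retraction: a positive right `𝔄`-module map `τ : A → 𝔄` with strictly dense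
image such that `τ` sends some bounded approximate identity of `A` strictly to a
projection `p` of `𝔄`.  (Nets are encoded by filters.) -/
structure IsRetraction (S : CStarAction 𝔄 A) (τ : A → 𝔄) : Prop where
  map_add : ∀ a b : A, τ (a + b) = τ a + τ b
  map_smulC : ∀ (c : ℂ) (a : A), τ (c • a) = c • τ a
  pos : ∀ a : A, IsPosElem (τ (star a * a))
  map_act : ∀ (a : A) (α : 𝔄), τ (S.act a α) = τ a * α
  strict_dense : ∀ (β : 𝔄) (ε : ℝ), 0 < ε → ∀ s : Finset 𝔄,
    ∃ a : A, ∀ α ∈ s, ‖τ (S.act a α) - β * α‖ < ε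
  bai : ∃ (l : Filter A) (p : 𝔄), l.NeBot ∧ (∃ C : ℝ, ∀ᶠ e in l, ‖e‖ ≤ C) ∧
    (∀ a : A, Tendsto (fun e => e * a) l (𝓝 a)) ∧
    (∀ a : A, Tendsto (fun e => a * e) l (𝓝 a)) ∧
    star p = p ∧ p * p = p ∧
    (∀ α : 𝔄, Tendsto (fun e => τ e * α) l (𝓝 (p * α))) ∧
    (∀ α : 𝔄, Tendsto (fun e => α * τ e) l (𝓝 (α * p)))

/-- An `𝔄`-trace: a tracial `𝔄`-retraction. -/
structure IsATrace (S : CStarAction 𝔄 A) (τ : A → 𝔄) extends IsRetraction S τ : Prop where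
  tracial : ∀ a b : A, τ (a * b) = τ (b * a)

/-! ### Hilbert C*-modules, adjointable operators, correspondences -/

variable (𝔄 : Type) [NonUnitalCStarAlgebra 𝔄]

/-- A (right) Hilbert `𝔄`-module structure on a complete normed space `X`. -/
structure HilbertModuleStr (X : Type) [NormedAddCommGroup X] [NormedSpace ℂ X]
    [CompleteSpace X] where
  smul : X → 𝔄 → X
  add_smul : ∀ (x y : X) (α : 𝔄), smul (x + y) α = smul x α + smul y α
  smul_add : ∀ (x : X) (α β : 𝔄), smul x (α + β) = smul x α + smul x β
  smulC_smul : ∀ (c : ℂ) (x : X) (α : 𝔄), smul (c • x) α = c • smul x α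
  smul_smulC : ∀ (c : ℂ) (x : X) (α : 𝔄), smul x (c • α) = c • smul x α
  smul_mul : ∀ (x : X) (α β : 𝔄), smul x (α * β) = smul (smul x α) β
  inner : X → X → 𝔄
  inner_add_left : ∀ x y z : X, inner (x + y) z = inner x z + inner y z
  inner_add_right : ∀ x y z : X, inner x (y + z) = inner x y + inner x z
  inner_smulC_right : ∀ (c : ℂ) (x y : X), inner x (c • y) = c • inner x y
  inner_smulC_left : ∀ (c : ℂ) (x y : X), inner (c • x) y = (starRingEnd ℂ c) • inner x y
  inner_smul_right : ∀ (x y : X) (α : 𝔄), inner x (smul y α) = inner x y * α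
  inner_star : ∀ x y : X, star (inner x y) = inner y x
  inner_pos : ∀ x : X, IsPosElem (inner x x)
  norm_inner : ∀ x : X, ‖x‖ ^ 2 = ‖inner x x‖

variable {𝔄}
variable {X : Type} [NormedAddCommGroup X] [NormedSpace ℂ X] [CompleteSpace X]

namespace HilbertModuleStr

variable (H : HilbertModuleStr 𝔄 X)

theorem inner_smul_left (x y : X) (α : 𝔄) :
    H.inner (H.smul x α) y = star α * H.inner x y := by
  rw [← H.inner_star, H.inner_smul_right, star_mul, H.inner_star]

theorem inner_zero_left (y : X) : H.inner 0 y = 0 := by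
  have h := H.inner_add_left 0 0 y
  rw [add_zero] at h
  exact add_left_cancel (h.symm.trans (add_zero _).symm)

theorem inner_zero_right (x : X) : H.inner x 0 = 0 := by
  rw [← H.inner_star, H.inner_zero_left, star_zero]

theorem inner_neg_left (x y : X) : H.inner (-x) y = -H.inner x y := by
  have : (-x : X) = ((-1 : ℂ) • x) := by simp
  rw [this, H.inner_smulC_left]; simp

theorem inner_neg_right (x y : X) : H.inner x (-y) = -H.inner x y := by
  have : (-y : X) = ((-1 : ℂ) • y) := by simp
  rw [this, H.inner_smulC_right]; simp

theorem inner_sub_left (x y z : X) : H.inner (x - y) z = H.inner x z - H.inner y z := by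
  rw [sub_eq_add_neg, H.inner_add_left, H.inner_neg_left, sub_eq_add_neg]

theorem inner_sub_right (x y z : X) : H.inner x (y - z) = H.inner x y - H.inner x z := by
  rw [sub_eq_add_neg, H.inner_add_right, H.inner_neg_right, sub_eq_add_neg]

end HilbertModuleStr

/-- A bounded adjointable operator on a Hilbert `𝔄`-module. -/
structure Adj (H : HilbertModuleStr 𝔄 X) where
  toFun : X → X
  adjFun : X → X
  inner_adj : ∀ x y : X, H.inner (toFun x) y = H.inner x (adjFun y)

namespace Adj

variable {H : HilbertModuleStr 𝔄 X}

theorem ext' {S T : Adj H} (h1 : S.toFun = T.toFun) (h2 : S.adjFun = T.adjFun) : S = T := by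
  cases S; cases T; simp_all

instance : Add (Adj H) :=
  ⟨fun S T =>
    { toFun := fun x => S.toFun x + T.toFun x
      adjFun := fun x => S.adjFun x + T.adjFun x
      inner_adj := fun x y => by
        rw [H.inner_add_left, H.inner_add_right, S.inner_adj, T.inner_adj] }⟩

instance : Zero (Adj H) :=
  ⟨{ toFun := fun _ => 0
     adjFun := fun _ => 0
     inner_adj := fun x y => by rw [H.inner_zero_left, H.inner_zero_right] }⟩

instance : Neg (Adj H) :=
  ⟨fun S =>
    { toFun := fun x => -S.toFun x
      adjFun := fun x => -S.adjFun x
      inner_adj := fun x y => by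
        rw [H.inner_neg_left, H.inner_neg_right, S.inner_adj] }⟩

instance : Sub (Adj H) :=
  ⟨fun S T =>
    { toFun := fun x => S.toFun x - T.toFun x
      adjFun := fun x => S.adjFun x - T.adjFun x
      inner_adj := fun x y => by
        rw [H.inner_sub_left, H.inner_sub_right, S.inner_adj, T.inner_adj] }⟩

instance : SMul ℂ (Adj H) :=
  ⟨fun c S =>
    { toFun := fun x => c • S.toFun x
      adjFun := fun x => (starRingEnd ℂ c) • S.adjFun x
      inner_adj := fun x y => by
        rw [H.inner_smulC_left, H.inner_smulC_right, S.inner_adj] }⟩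

instance : Mul (Adj H) :=
  ⟨fun S T =>
    { toFun := fun x => S.toFun (T.toFun x)
      adjFun := fun x => T.adjFun (S.adjFun x)
      inner_adj := fun x y => by rw [S.inner_adj, T.inner_adj] }⟩

instance : One (Adj H) :=
  ⟨{ toFun := id
     adjFun := id
     inner_adj := fun _ _ => rfl }⟩

instance : Star (Adj H) :=
  ⟨fun S =>
    { toFun := S.adjFun
      adjFun := S.toFun
      inner_adj := fun x y =>
        calc H.inner (S.adjFun x) y = star (H.inner y (S.adjFun x)) := (H.inner_star _ _).symm
          _ = star (H.inner (S.toFun y) x) := by rw [S.inner_adj]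
          _ = H.inner x (S.toFun y) := H.inner_star _ _ }⟩

@[simp] theorem add_toFun (S T : Adj H) (x : X) : (S + T).toFun x = S.toFun x + T.toFun x := rfl
@[simp] theorem add_adjFun (S T : Adj H) (x : X) :
    (S + T).adjFun x = S.adjFun x + T.adjFun x := rfl
@[simp] theorem zero_toFun (x : X) : (0 : Adj H).toFun x = 0 := rfl
@[simp] theorem zero_adjFun (x : X) : (0 : Adj H).adjFun x = 0 := rfl

instance : AddCommMonoid (Adj H) where
  add_assoc S T U := ext' (funext fun x => add_assoc _ _ _) (funext fun x => add_assoc _ _ _)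
  zero_add S := ext' (funext fun x => zero_add _) (funext fun x => zero_add _)
  add_zero S := ext' (funext fun x => add_zero _) (funext fun x => add_zero _)
  add_comm S T := ext' (funext fun x => add_comm _ _) (funext fun x => add_comm _ _)
  nsmul := nsmulRec

/-- The operator norm of a (automatically bounded) adjointable operator. -/
noncomputable instance : Norm (Adj H) := ⟨fun T => ⨆ x : X, ‖T.toFun x‖ / ‖x‖⟩

end Adj

/-- The commutant of a set of adjointable operators. -/
def Commutant {H : HilbertModuleStr 𝔄 X} (Ω : Set (Adj H)) : Set (Adj H) :=
  {T | ∀ U ∈ Ω, T * U = U * T}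

/-! ### Correspondences, representations, c.c.p. module maps -/

variable (𝔄) in
/-- An `𝔄`-correspondence: a right Hilbert `𝔄`-module together with a left action of `𝔄`
by adjointable operators. -/
structure CorrStr (X : Type) [NormedAddCommGroup X] [NormedSpace ℂ X] [CompleteSpace X]
    extends HilbertModuleStr 𝔄 X where
  lsmul : 𝔄 → X → X
  lsmul_adj : ∀ (α : 𝔄) (x y : X),
    toHilbertModuleStr.inner (lsmul α x) y = toHilbertModuleStr.inner x (lsmul (star α) y)
  add_lsmul : ∀ (α β : 𝔄) (x : X), lsmul (α + β) x = lsmul α x + lsmul β x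
  smulC_lsmul : ∀ (c : ℂ) (α : 𝔄) (x : X), lsmul (c • α) x = c • lsmul α x
  mul_lsmul : ∀ (α β : 𝔄) (x : X), lsmul (α * β) x = lsmul α (lsmul β x)

namespace CorrStr

variable {X : Type} [NormedAddCommGroup X] [NormedSpace ℂ X] [CompleteSpace X]
variable (C : CorrStr 𝔄 X)

/-- The left action of `α ∈ 𝔄` as an adjointable operator. -/
def lactAdj (α : 𝔄) : Adj C.toHilbertModuleStr :=
  { toFun := C.lsmul α
    adjFun := C.lsmul (star α)
    inner_adj := fun x y => C.lsmul_adj α x y }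

/-- The canonical right `𝔄`-module structure on the adjointable operators of a
correspondence: `(T • α) x = T (α • x)`. -/
def ract (T : Adj C.toHilbertModuleStr) (α : 𝔄) : Adj C.toHilbertModuleStr :=
  T * C.lactAdj α

end CorrStr

variable (𝔄) in
/-- A representation of the `𝔄`-C*-module `A` in an `𝔄`-correspondence: a `*`-homomorphism
into the adjointable operators which is also a right `𝔄`-module map. -/
structure RepC {A : Type} [NonUnitalCStarAlgebra A] (S : CStarAction 𝔄 A)
    {X : Type} [NormedAddCommGroup X] [NormedSpace ℂ X] [CompleteSpace X]
    (C : CorrStr 𝔄 X) where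
  ρ : A → Adj C.toHilbertModuleStr
  map_add : ∀ a b : A, ρ (a + b) = ρ a + ρ b
  map_smulC : ∀ (c : ℂ) (a : A), ρ (c • a) = c • ρ a
  map_mul : ∀ a b : A, ρ (a * b) = ρ a * ρ b
  map_star : ∀ a : A, ρ (star a) = star (ρ a)
  map_act : ∀ (a : A) (α : 𝔄), ρ (S.act a α) = C.ract (ρ a) α

variable (𝔄) in
/-- A bundled `𝔄`-correspondence. -/
structure BCorr where
  X : Type
  [iN : NormedAddCommGroup X]
  [iS : NormedSpace ℂ X]
  [iC : CompleteSpace X]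
  corr : CorrStr 𝔄 X

attribute [instance] BCorr.iN BCorr.iS BCorr.iC

section CCP

variable {X : Type} [NormedAddCommGroup X] [NormedSpace ℂ X] [CompleteSpace X]

/-- A contractive completely positive right `𝔄`-module map from the adjointable operators
of an `𝔄`-correspondence into a normed `*`-object `Z` with a right `𝔄`-action. -/
structure IsCCPModMap (C : CorrStr 𝔄 X) {Z : Type} [AddCommMonoid Z] [Mul Z] [Star Z]
    [Norm Z] [SMul ℂ Z] (actZ : Z → 𝔄 → Z) (φ : Adj C.toHilbertModuleStr → Z) : Prop where
  map_add : ∀ S T, φ (S + T) = φ S + φ T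
  map_smulC : ∀ (c : ℂ) (T), φ (c • T) = c • φ T
  cp : IsCPMap φ
  contractive : ∀ T, ‖φ T‖ ≤ ‖T‖
  map_ract : ∀ (T) (α : 𝔄), φ (C.ract T α) = actZ (φ T) α

end CCP

/-- An amenable `𝔄`-trace: for every faithful representation of `A` in an
`𝔄`-correspondence `Y`, the trace `τ` extends to a c.c.p. right module map
`φ : B(Y) → 𝔄` which is invariant under conjugation by unitaries in `A + ℂ I`. -/
def IsAmenableTrace {A : Type} [NonUnitalCStarAlgebra A] (S : CStarAction 𝔄 A)
    (τ : A → 𝔄) : Prop :=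
  IsATrace S τ ∧
    ∀ (Y : BCorr 𝔄) (π : RepC 𝔄 S Y.corr), Function.Injective π.ρ →
      ∃ φ : Adj Y.corr.toHilbertModuleStr → 𝔄,
        IsCCPModMap Y.corr (fun z α => z * α) φ ∧
        (∀ a : A, φ (π.ρ a) = τ a) ∧
        (∀ (a : A) (c : ℂ),
          (star (π.ρ a + c • 1) * (π.ρ a + c • 1) = 1 ∧
            (π.ρ a + c • 1) * star (π.ρ a + c • 1) = 1) →
          ∀ T, φ ((π.ρ a + c • 1) * T * star (π.ρ a + c • 1)) = φ T)

/-! ### A model of the GNS construction `L²(A, τ)` for an `𝔄`-trace -/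

variable {A : Type} [NonUnitalCStarAlgebra A]
variable {X : Type} [NormedAddCommGroup X] [NormedSpace ℂ X] [CompleteSpace X]

variable (𝔄 X) in
/-- A realization of the Hilbert `𝔄`-module `L²(A, τ)` together with the canonical map
`a ↦ â`, the left/right regular representations and the left `𝔄`-action. -/
structure GNSModel (S : CStarAction 𝔄 A) (τ : A → 𝔄) where
  toH : HilbertModuleStr 𝔄 X
  hat : A → X
  hat_add : ∀ a b : A, hat (a + b) = hat a + hat b
  hat_smulC : ∀ (c : ℂ) (a : A), hat (c • a) = c • hat a
  hat_act : ∀ (a : A) (α : 𝔄), hat (S.act a α) = toH.smul (hat a) α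
  inner_hat : ∀ a b : A, toH.inner (hat a) (hat b) = τ (star a * b)
  dense_hat : DenseRange hat
  lreg : A → Adj toH
  lreg_spec : ∀ a b : A, (lreg a).toFun (hat b) = hat (a * b)
  rreg : A → Adj toH
  rreg_spec : ∀ a b : A, (rreg a).toFun (hat b) = hat (b * a)
  lact : 𝔄 → X → X
  lact_hat : ∀ (α : 𝔄) (a : A), lact α (hat a) = hat (S.lact α a)
  lact_adj : ∀ (α : 𝔄) (x y : X), toH.inner (lact α x) y = toH.inner x (lact (star α) y)

variable (𝔄 X) in
/-- A `GNSModel` together with the canonical cyclic vector `1̂ = lim êᵢ`. -/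
structure GNSModelOne (S : CStarAction 𝔄 A) (τ : A → 𝔄) extends GNSModel 𝔄 X S τ where
  one : X
  lreg_one : ∀ a : A, (lreg a).toFun one = hat a
  rreg_one : ∀ a : A, (rreg a).toFun one = hat a

namespace GNSModel

variable {S : CStarAction 𝔄 A} {τ : A → 𝔄}

/-- The left `𝔄`-action of a GNS model as an adjointable operator. -/
def lactAdj (M : GNSModel 𝔄 X S τ) (α : 𝔄) : Adj M.toH :=
  { toFun := M.lact α
    adjFun := M.lact (star α)
    inner_adj := fun x y => M.lact_adj α x y }

/-- The right `𝔄`-module structure on `B(L²(A,τ))`. -/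
def ract (M : GNSModel 𝔄 X S τ) (T : Adj M.toH) (α : 𝔄) : Adj M.toH :=
  T * M.lactAdj α

end GNSModel

section AuxLemmas

variable {𝔄 : Type} [NonUnitalCStarAlgebra 𝔄]
variable {X : Type} [NormedAddCommGroup X] [NormedSpace ℂ X] [CompleteSpace X]

namespace HilbertModuleStr

variable (H : HilbertModuleStr 𝔄 X)

theorem aux_eq_zero_of_inner_self {x : X} (h : H.inner x x = 0) : x = 0 := by
  have h2 := H.norm_inner x
  rw [h, norm_zero, pow_eq_zero_iff (two_ne_zero)] at h2
  exact norm_eq_zero.mp h2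

theorem aux_ext_right {u v : X} (h : ∀ z : X, H.inner z u = H.inner z v) : u = v := by
  have h0 : H.inner (u - v) (u - v) = 0 := by
    rw [H.inner_sub_right, h (u - v), sub_self]
  exact sub_eq_zero.mp (H.aux_eq_zero_of_inner_self h0)

theorem aux_ext_left {u v : X} (h : ∀ z : X, H.inner u z = H.inner v z) : u = v := by
  apply H.aux_ext_right
  intro z
  rw [← H.inner_star u z, ← H.inner_star v z, h z]

theorem aux_inner_sum_bound (x y : X) :
    ‖H.inner x y + H.inner y x‖ ≤ (‖x‖ + ‖y‖) ^ 2 + ‖x‖ ^ 2 + ‖y‖ ^ 2 := by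
  have e : H.inner x y + H.inner y x
      = H.inner (x + y) (x + y) - H.inner x x - H.inner y y := by
    rw [H.inner_add_left, H.inner_add_right, H.inner_add_right]; abel
  rw [e]
  have t1 : ‖H.inner (x + y) (x + y) - H.inner x x - H.inner y y‖
      ≤ ‖H.inner (x + y) (x + y)‖ + ‖H.inner x x‖ + ‖H.inner y y‖ := by
    calc ‖H.inner (x + y) (x + y) - H.inner x x - H.inner y y‖
        ≤ ‖H.inner (x + y) (x + y) - H.inner x x‖ + ‖H.inner y y‖ := norm_sub_le _ _
      _ ≤ ‖H.inner (x + y) (x + y)‖ + ‖H.inner x x‖ + ‖H.inner y y‖ := by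
          gcongr; exact norm_sub_le _ _
  refine t1.trans ?_
  rw [← H.norm_inner, ← H.norm_inner, ← H.norm_inner]
  have h4 : ‖x + y‖ ≤ ‖x‖ + ‖y‖ := norm_add_le _ _
  have h5 : ‖x + y‖ ^ 2 ≤ (‖x‖ + ‖y‖) ^ 2 := by
    apply pow_le_pow_left₀ (norm_nonneg _) h4
  linarith

theorem aux_inner_crude (x y : X) :
    ‖H.inner x y‖ ≤ (‖x‖ + ‖y‖) ^ 2 + ‖x‖ ^ 2 + ‖y‖ ^ 2 := by
  have hsum := H.aux_inner_sum_bound x y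
  have hdiff : ‖H.inner x y - H.inner y x‖ ≤ (‖x‖ + ‖y‖) ^ 2 + ‖x‖ ^ 2 + ‖y‖ ^ 2 := by
    have e : H.inner x (Complex.I • y) + H.inner (Complex.I • y) x
        = Complex.I • (H.inner x y - H.inner y x) := by
      rw [H.inner_smulC_right, H.inner_smulC_left, Complex.conj_I, smul_sub, neg_smul]
      abel
    have hb := H.aux_inner_sum_bound x (Complex.I • y)
    rw [e] at hb
    rw [norm_smul, Complex.norm_I, one_mul] at hb
    rwa [norm_smul, Complex.norm_I, one_mul] at hb
  have e2 : H.inner x y + H.inner x y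
      = (H.inner x y + H.inner y x) + (H.inner x y - H.inner y x) := by abel
  have e3 : ‖H.inner x y + H.inner x y‖ = 2 * ‖H.inner x y‖ := by
    rw [← two_smul ℝ (H.inner x y), norm_smul]
    simp
  have t : ‖H.inner x y + H.inner x y‖
      ≤ ((‖x‖ + ‖y‖) ^ 2 + ‖x‖ ^ 2 + ‖y‖ ^ 2) + ((‖x‖ + ‖y‖) ^ 2 + ‖x‖ ^ 2 + ‖y‖ ^ 2) := by
    rw [e2]; exact (norm_add_le _ _).trans (by gcongr)
  rw [e3] at t
  linarith

theorem aux_norm_inner_le (x y : X) : ‖H.inner x y‖ ≤ 6 * (‖x‖ * ‖y‖) := by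
  rcases eq_or_ne x 0 with rfl | hx
  · rw [H.inner_zero_left]; simp
  rcases eq_or_ne y 0 with rfl | hy
  · rw [H.inner_zero_right]; simp
  have hnx : (0:ℝ) < ‖x‖ := norm_pos_iff.mpr hx
  have hny : (0:ℝ) < ‖y‖ := norm_pos_iff.mpr hy
  have hcx : ((‖x‖ : ℂ)) ≠ 0 := by exact_mod_cast hnx.ne'
  have hcy : ((‖y‖ : ℂ)) ≠ 0 := by exact_mod_cast hny.ne'
  set x' : X := ((‖x‖ : ℂ))⁻¹ • x with hx'def
  set y' : X := ((‖y‖ : ℂ))⁻¹ • y with hy'def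
  have hnx' : ‖x'‖ = 1 := by
    rw [hx'def, norm_smul, norm_inv, Complex.norm_real, norm_norm,
      inv_mul_cancel₀ hnx.ne']
  have hny' : ‖y'‖ = 1 := by
    rw [hy'def, norm_smul, norm_inv, Complex.norm_real, norm_norm,
      inv_mul_cancel₀ hny.ne']
  have hxx : x = (‖x‖ : ℂ) • x' := by
    rw [hx'def, smul_smul, mul_inv_cancel₀ hcx, one_smul]
  have hyy : y = (‖y‖ : ℂ) • y' := by
    rw [hy'def, smul_smul, mul_inv_cancel₀ hcy, one_smul]
  have key : ‖H.inner x y‖ = ‖x‖ * (‖y‖ * ‖H.inner x' y'‖) := by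
    conv_lhs => rw [hxx, hyy]
    rw [H.inner_smulC_left, H.inner_smulC_right, Complex.conj_ofReal,
      norm_smul, norm_smul, Complex.norm_real, Complex.norm_real,
      norm_norm, norm_norm]
  have hb := H.aux_inner_crude x' y'
  rw [hnx', hny'] at hb
  norm_num at hb
  rw [key]
  calc ‖x‖ * (‖y‖ * ‖H.inner x' y'‖) ≤ ‖x‖ * (‖y‖ * 6) := by
        gcongr
    _ = 6 * (‖x‖ * ‖y‖) := by ring

theorem aux_cont_inner_left (z : X) : Continuous fun w : X => H.inner w z := by
  refine (LipschitzWith.of_dist_le_mul (K := (6 * ‖z‖).toNNReal) ?_).continuous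
  intro a b
  rw [dist_eq_norm, dist_eq_norm, ← H.inner_sub_left]
  calc ‖H.inner (a - b) z‖ ≤ 6 * (‖a - b‖ * ‖z‖) := H.aux_norm_inner_le _ _
    _ = (6 * ‖z‖) * ‖a - b‖ := by ring
    _ = ((6 * ‖z‖).toNNReal : ℝ) * ‖a - b‖ := by
        rw [Real.coe_toNNReal _ (by positivity)]

theorem aux_cont_inner_right (z : X) : Continuous fun w : X => H.inner z w := by
  refine (LipschitzWith.of_dist_le_mul (K := (6 * ‖z‖).toNNReal) ?_).continuous
  intro a b
  rw [dist_eq_norm, dist_eq_norm, ← H.inner_sub_right]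
  calc ‖H.inner z (a - b)‖ ≤ 6 * (‖z‖ * ‖a - b‖) := H.aux_norm_inner_le _ _
    _ = (6 * ‖z‖) * ‖a - b‖ := by ring
    _ = ((6 * ‖z‖).toNNReal : ℝ) * ‖a - b‖ := by
        rw [Real.coe_toNNReal _ (by positivity)]

theorem aux_smul_neg (x : X) (α : 𝔄) : H.smul (-x) α = -(H.smul x α) := by
  have h := H.smulC_smul (-1 : ℂ) x α
  rw [neg_one_smul, neg_one_smul] at h
  exact h

theorem aux_smul_sub (x y : X) (α : 𝔄) :
    H.smul (x - y) α = H.smul x α - H.smul y α := by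
  rw [sub_eq_add_neg, H.add_smul, H.aux_smul_neg, sub_eq_add_neg]

theorem aux_norm_smul_le (x : X) (α : 𝔄) : ‖H.smul x α‖ ≤ ‖x‖ * ‖α‖ := by
  have h : ‖H.smul x α‖ ^ 2 = ‖star α * (H.inner x x * α)‖ := by
    rw [H.norm_inner, H.inner_smul_left, H.inner_smul_right]
  have h2 : ‖star α * (H.inner x x * α)‖ ≤ ‖α‖ * (‖x‖ ^ 2 * ‖α‖) := by
    calc ‖star α * (H.inner x x * α)‖ ≤ ‖star α‖ * ‖H.inner x x * α‖ := norm_mul_le _ _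
      _ ≤ ‖star α‖ * (‖H.inner x x‖ * ‖α‖) := by gcongr; exact norm_mul_le _ _
      _ = ‖α‖ * (‖x‖ ^ 2 * ‖α‖) := by rw [norm_star, ← H.norm_inner]
  have h3 : ‖H.smul x α‖ ^ 2 ≤ (‖x‖ * ‖α‖) ^ 2 := by rw [h]; nlinarith [norm_nonneg x, norm_nonneg α]
  have := Real.sqrt_le_sqrt h3
  rwa [Real.sqrt_sq (norm_nonneg _), Real.sqrt_sq (by positivity)] at this

theorem aux_cont_smul (α : 𝔄) : Continuous fun x : X => H.smul x α := by
  refine (LipschitzWith.of_dist_le_mul (K := ‖α‖.toNNReal) ?_).continuous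
  intro a b
  rw [dist_eq_norm, dist_eq_norm, ← H.aux_smul_sub]
  calc ‖H.smul (a - b) α‖ ≤ ‖a - b‖ * ‖α‖ := H.aux_norm_smul_le _ _
    _ = (‖α‖.toNNReal : ℝ) * ‖a - b‖ := by
        rw [Real.coe_toNNReal _ (norm_nonneg _)]; ring

end HilbertModuleStr

namespace Adj

variable {H : HilbertModuleStr 𝔄 X}

theorem aux_toFun_add (T : Adj H) (x y : X) :
    T.toFun (x + y) = T.toFun x + T.toFun y := by
  apply H.aux_ext_left
  intro z
  rw [T.inner_adj, H.inner_add_left, H.inner_add_left, T.inner_adj, T.inner_adj]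

theorem aux_toFun_smulC (T : Adj H) (c : ℂ) (x : X) :
    T.toFun (c • x) = c • T.toFun x := by
  apply H.aux_ext_left
  intro z
  rw [T.inner_adj, H.inner_smulC_left, H.inner_smulC_left, T.inner_adj]

theorem aux_cont_toFun (T : Adj H) : Continuous T.toFun := by
  let g : X →ₗ[ℂ] X :=
    { toFun := T.toFun
      map_add' := T.aux_toFun_add
      map_smul' := fun c x => T.aux_toFun_smulC c x }
  have hg : Continuous g := by
    apply g.continuous_of_seq_closed_graph
    intro u x y hu hTu
    apply H.aux_ext_left
    intro z
    have h1 : Tendsto (fun n => H.inner (T.toFun (u n)) z) atTop (𝓝 (H.inner y z)) :=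
      ((H.aux_cont_inner_left z).tendsto y).comp hTu
    have h2 : Tendsto (fun n => H.inner (u n) (T.adjFun z)) atTop
        (𝓝 (H.inner x (T.adjFun z))) :=
      ((H.aux_cont_inner_left (T.adjFun z)).tendsto x).comp hu
    have e : (fun n => H.inner (T.toFun (u n)) z)
        = fun n => H.inner (u n) (T.adjFun z) := funext fun n => T.inner_adj _ _
    rw [e] at h1
    have := tendsto_nhds_unique h1 h2
    rw [this]
    exact (T.inner_adj x z).symm
  exact hg

theorem aux_cont_adjFun (T : Adj H) : Continuous T.adjFun :=
  aux_cont_toFun (star T)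

end Adj

end AuxLemmas
section MainAux

variable {𝔄 A : Type} [NonUnitalCStarAlgebra 𝔄] [NonUnitalCStarAlgebra A]
variable {X : Type} [NormedAddCommGroup X] [NormedSpace ℂ X] [CompleteSpace X]
variable {S : CStarAction 𝔄 A} {τ : A → 𝔄}

namespace GNSModel

variable (M : GNSModel 𝔄 X S τ)

theorem aux_hat_neg (a : A) : M.hat (-a) = -M.hat a := by
  have h := M.hat_smulC (-1) a
  rw [neg_one_smul, neg_one_smul] at h
  exact h

theorem aux_hat_sub (a b : A) : M.hat (a - b) = M.hat a - M.hat b := by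
  rw [sub_eq_add_neg, M.hat_add, M.aux_hat_neg, sub_eq_add_neg]

theorem aux_norm_hat_star (htr : ∀ a b : A, τ (a * b) = τ (b * a)) (a : A) :
    ‖M.hat (star a)‖ = ‖M.hat a‖ := by
  have h1 : ‖M.hat (star a)‖ ^ 2 = ‖τ (a * star a)‖ := by
    rw [M.toH.norm_inner, M.inner_hat, star_star]
  have h2 : ‖M.hat a‖ ^ 2 = ‖τ (star a * a)‖ := by
    rw [M.toH.norm_inner, M.inner_hat]
  rw [htr] at h1
  have h3 : ‖M.hat (star a)‖ ^ 2 = ‖M.hat a‖ ^ 2 := h1.trans h2.symm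
  calc ‖M.hat (star a)‖ = Real.sqrt (‖M.hat (star a)‖ ^ 2) :=
        (Real.sqrt_sq (norm_nonneg _)).symm
    _ = Real.sqrt (‖M.hat a‖ ^ 2) := by rw [h3]
    _ = ‖M.hat a‖ := Real.sqrt_sq (norm_nonneg _)

theorem aux_hat_star_eq (htr : ∀ a b : A, τ (a * b) = τ (b * a)) {a b : A}
    (h : M.hat a = M.hat b) : M.hat (star a) = M.hat (star b) := by
  have h0 : ‖M.hat (star a) - M.hat (star b)‖ = 0 := by
    rw [← M.aux_hat_sub, ← star_sub, M.aux_norm_hat_star htr, M.aux_hat_sub, h,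
      sub_self, norm_zero]
  exact sub_eq_zero.mp (norm_eq_zero.mp h0)

theorem aux_ext (f g : X → X) (hf : Continuous f) (hg : Continuous g)
    (h : ∀ a : A, f (M.hat a) = g (M.hat a)) : ∀ x, f x = g x :=
  fun x => congrFun (M.dense_hat.equalizer hf hg (funext h)) x

theorem aux_extA (f g : X → 𝔄) (hf : Continuous f) (hg : Continuous g)
    (h : ∀ a : A, f (M.hat a) = g (M.hat a)) : ∀ x, f x = g x :=
  fun x => congrFun (M.dense_hat.equalizer hf hg (funext h)) x

theorem aux_ext_inner_hat {u v : X}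
    (h : ∀ d : A, M.toH.inner (M.hat d) u = M.toH.inner (M.hat d) v) : u = v := by
  apply M.toH.aux_ext_right
  exact M.aux_extA _ _ (M.toH.aux_cont_inner_left u) (M.toH.aux_cont_inner_left v) h

theorem aux_cont_lact (α : 𝔄) : Continuous (M.lact α) :=
  (M.lactAdj α).aux_cont_toFun

theorem aux_lreg_adj (b c : A) :
    (M.lreg b).adjFun (M.hat c) = M.hat (star b * c) := by
  apply M.aux_ext_inner_hat
  intro d
  rw [← (M.lreg b).inner_adj, M.lreg_spec, M.inner_hat, M.inner_hat, star_mul, mul_assoc]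

theorem aux_rreg_adj (htr : ∀ a b : A, τ (a * b) = τ (b * a)) (a c : A) :
    (M.rreg a).adjFun (M.hat c) = M.hat (c * star a) := by
  apply M.aux_ext_inner_hat
  intro d
  rw [← (M.rreg a).inner_adj, M.rreg_spec, M.inner_hat, M.inner_hat, star_mul,
    mul_assoc, htr, mul_assoc]

end GNSModel

end MainAux
/-- Let `τ : A → 𝔄` be an `𝔄`-trace with non degenerate action. Then
(i) `π_τ^op(A^op) ⊆ π_τ(A)'` in `B(L²(A,τ))`; and (ii) there is a conjugate-linear
`𝔄`-morphism `J` on `L²(A,τ)` with `J² = id`, `J(â) = (a*)^`, `J π_τ(a) J = π_τ^op(a*)`,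
and `⟨Jz, z'⟩ = ⟨Jz', z⟩`. -/
theorem trace_commutation_and_conjugation
    {𝔄 A : Type} [NonUnitalCStarAlgebra 𝔄] [NonUnitalCStarAlgebra A]
    {X : Type} [NormedAddCommGroup X] [NormedSpace ℂ X] [CompleteSpace X]
    (S : CStarAction 𝔄 A) (τ : A → 𝔄) (hτ : IsATrace S τ) (hnd : S.NonDegenerate)
    (M : GNSModel 𝔄 X S τ) :
    (∀ a : A, M.rreg a ∈ Commutant (Set.range M.lreg)) ∧
    ∃ J : X → X,
      Continuous J ∧
      (∀ x y : X, J (x + y) = J x + J y) ∧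
      (∀ (c : ℂ) (x : X), J (c • x) = (starRingEnd ℂ c) • J x) ∧
      (∀ (α : 𝔄) (x : X), J (M.lact α x) = M.toH.smul (J x) (star α)) ∧
      (∀ (x : X) (α : 𝔄), J (M.toH.smul x α) = M.lact (star α) (J x)) ∧
      (∀ x : X, J (J x) = x) ∧
      (∀ a : A, J (M.hat a) = M.hat (star a)) ∧
      (∀ (a : A) (x : X), J ((M.lreg a).toFun (J x)) = (M.rreg (star a)).toFun x) ∧
      (∀ z z' : X, M.toH.inner (J z) z' = M.toH.inner (J z') z) := by
  have htr := hτ.tracial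
  constructor
  · intro a
    simp only [Commutant, Set.mem_setOf_eq]
    rintro U ⟨b, rfl⟩
    refine Adj.ext' ?_ ?_
    · funext x
      refine M.aux_ext (fun x => (M.rreg a).toFun ((M.lreg b).toFun x))
        (fun x => (M.lreg b).toFun ((M.rreg a).toFun x))
        ((M.rreg a).aux_cont_toFun.comp (M.lreg b).aux_cont_toFun)
        ((M.lreg b).aux_cont_toFun.comp (M.rreg a).aux_cont_toFun) ?_ x
      intro c
      show (M.rreg a).toFun ((M.lreg b).toFun (M.hat c))
          = (M.lreg b).toFun ((M.rreg a).toFun (M.hat c))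
      rw [M.lreg_spec, M.rreg_spec, M.rreg_spec, M.lreg_spec, mul_assoc]
    · funext x
      refine M.aux_ext (fun x => (M.lreg b).adjFun ((M.rreg a).adjFun x))
        (fun x => (M.rreg a).adjFun ((M.lreg b).adjFun x))
        ((M.lreg b).aux_cont_adjFun.comp (M.rreg a).aux_cont_adjFun)
        ((M.rreg a).aux_cont_adjFun.comp (M.lreg b).aux_cont_adjFun) ?_ x
      intro c
      show (M.lreg b).adjFun ((M.rreg a).adjFun (M.hat c))
          = (M.rreg a).adjFun ((M.lreg b).adjFun (M.hat c))
      rw [M.aux_rreg_adj htr, M.aux_lreg_adj, M.aux_lreg_adj, M.aux_rreg_adj htr,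
        mul_assoc]
  · have hD : Dense (Set.range M.hat) := M.dense_hat
    have hui : IsUniformInducing (Subtype.val : Set.range M.hat → X) :=
      isUniformEmbedding_subtype_val.toIsUniformInducing
    have hde : DenseRange (Subtype.val : Set.range M.hat → X) := hD.denseRange_val
    set f : Set.range M.hat → X := fun d => M.hat (star (Classical.choose d.2)) with hfdef
    have hfval : ∀ (d : Set.range M.hat) (a : A), M.hat a = (d : X) →
        f d = M.hat (star a) := by
      intro d a ha
      have : f d = M.hat (star (Classical.choose d.2)) := by rw [hfdef]
      rw [this]
      exact M.aux_hat_star_eq htr ((Classical.choose_spec d.2).trans ha.symm)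
    have hfu : UniformContinuous f := by
      refine LipschitzWith.uniformContinuous (LipschitzWith.of_dist_le_mul (K := 1) ?_)
      intro d₁ d₂
      obtain ⟨a, ha⟩ : ∃ a, M.hat a = (d₁ : X) := d₁.2
      obtain ⟨b, hb⟩ : ∃ b, M.hat b = (d₂ : X) := d₂.2
      rw [hfval d₁ a ha, hfval d₂ b hb, Subtype.dist_eq, dist_eq_norm, dist_eq_norm,
        ← ha, ← hb, ← M.aux_hat_sub, ← M.aux_hat_sub, ← star_sub,
        M.aux_norm_hat_star htr, M.aux_hat_sub]
      simp
    set J : X → X := (hui.isDenseInducing hde).extend f with hJdef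
    have hJc : Continuous J := (uniformContinuous_uniformly_extend hui hde hfu).continuous
    have hJhat : ∀ a : A, J (M.hat a) = M.hat (star a) := by
      intro a
      have hmem : M.hat a ∈ Set.range M.hat := ⟨a, rfl⟩
      have h0 : J ((⟨M.hat a, hmem⟩ : Set.range M.hat) : X) = f ⟨M.hat a, hmem⟩ :=
        uniformly_extend_of_ind hui hde hfu ⟨M.hat a, hmem⟩
      rw [show ((⟨M.hat a, hmem⟩ : Set.range M.hat) : X) = M.hat a from rfl] at h0
      rw [h0, hfval ⟨M.hat a, hmem⟩ a rfl]
    have hJadd : ∀ x y : X, J (x + y) = J x + J y := by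
      have step : ∀ (b : A) (x : X), J (x + M.hat b) = J x + J (M.hat b) := by
        intro b
        refine M.aux_ext (fun x => J (x + M.hat b)) (fun x => J x + J (M.hat b))
          (hJc.comp (continuous_id.add continuous_const)) (hJc.add continuous_const) ?_
        intro a
        show J (M.hat a + M.hat b) = J (M.hat a) + J (M.hat b)
        rw [← M.hat_add, hJhat, hJhat, hJhat, star_add, M.hat_add]
      intro x y
      refine M.aux_ext (fun y => J (x + y)) (fun y => J x + J y)
        (hJc.comp (continuous_const.add continuous_id)) (continuous_const.add hJc) ?_ y
      intro b
      exact step b x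
    have hJsmulC : ∀ (c : ℂ) (x : X), J (c • x) = (starRingEnd ℂ c) • J x := by
      intro c
      refine M.aux_ext (fun x => J (c • x)) (fun x => (starRingEnd ℂ c) • J x)
        (hJc.comp (continuous_const_smul c)) ((continuous_const_smul _).comp hJc) ?_
      intro a
      show J (c • M.hat a) = (starRingEnd ℂ c) • J (M.hat a)
      rw [← M.hat_smulC, hJhat, hJhat, star_smul, M.hat_smulC]
      simp [Complex.star_def]
    have hJlact : ∀ (α : 𝔄) (x : X), J (M.lact α x) = M.toH.smul (J x) (star α) := by
      intro α
      refine M.aux_ext (fun x => J (M.lact α x)) (fun x => M.toH.smul (J x) (star α))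
        (hJc.comp (M.aux_cont_lact α)) ((M.toH.aux_cont_smul (star α)).comp hJc) ?_
      intro a
      show J (M.lact α (M.hat a)) = M.toH.smul (J (M.hat a)) (star α)
      rw [M.lact_hat, hJhat, hJhat, ← M.hat_act]
      simp only [CStarAction.lact, star_star]
    have hJsmulr : ∀ (x : X) (α : 𝔄), J (M.toH.smul x α) = M.lact (star α) (J x) := by
      have key : ∀ (α : 𝔄) (x : X), J (M.toH.smul x α) = M.lact (star α) (J x) := by
        intro α
        refine M.aux_ext (fun x => J (M.toH.smul x α)) (fun x => M.lact (star α) (J x))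
          (hJc.comp (M.toH.aux_cont_smul α)) ((M.aux_cont_lact (star α)).comp hJc) ?_
        intro a
        show J (M.toH.smul (M.hat a) α) = M.lact (star α) (J (M.hat a))
        rw [← M.hat_act, hJhat, hJhat, M.lact_hat]
        simp only [CStarAction.lact, star_star]
      exact fun x α => key α x
    have hJJ : ∀ x : X, J (J x) = x := by
      intro x
      refine M.aux_ext (fun x => J (J x)) (fun x => x) (hJc.comp hJc) continuous_id ?_ x
      intro a
      show J (J (M.hat a)) = M.hat a
      rw [hJhat, hJhat, star_star]
    have hJreg : ∀ (a : A) (x : X),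
        J ((M.lreg a).toFun (J x)) = (M.rreg (star a)).toFun x := by
      intro a
      refine M.aux_ext (fun x => J ((M.lreg a).toFun (J x)))
        (fun x => (M.rreg (star a)).toFun x)
        (hJc.comp ((M.lreg a).aux_cont_toFun.comp hJc)) (M.rreg (star a)).aux_cont_toFun ?_
      intro b
      show J ((M.lreg a).toFun (J (M.hat b))) = (M.rreg (star a)).toFun (M.hat b)
      rw [hJhat, M.lreg_spec, hJhat, M.rreg_spec, star_mul, star_star]
    have hstep : ∀ (b : A) (z : X),
        M.toH.inner (J z) (M.hat b) = M.toH.inner (J (M.hat b)) z := by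
      intro b
      refine M.aux_extA (fun z => M.toH.inner (J z) (M.hat b))
        (fun z => M.toH.inner (J (M.hat b)) z)
        ((M.toH.aux_cont_inner_left (M.hat b)).comp hJc)
        (M.toH.aux_cont_inner_right _) ?_
      intro a
      show M.toH.inner (J (M.hat a)) (M.hat b) = M.toH.inner (J (M.hat b)) (M.hat a)
      rw [hJhat, hJhat, M.inner_hat, M.inner_hat, star_star, star_star, htr]
    have hJinner : ∀ z z' : X, M.toH.inner (J z) z' = M.toH.inner (J z') z := by
      intro z
      refine M.aux_extA (fun z' => M.toH.inner (J z) z') (fun z' => M.toH.inner (J z') z)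
        (M.toH.aux_cont_inner_right _) ((M.toH.aux_cont_inner_left z).comp hJc) ?_
      intro b
      exact hstep b z
    exact ⟨J, hJc, hJadd, hJsmulC, hJlact, hJsmulr, hJJ, hJhat, hJreg, hJinner⟩
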